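/- (Proposition 1, iterated form.) For every c with 2/π < c < 1 there exists ε > 0 such that for every starting point θ_0 with |θ_0 − θ*| < ε, the sequence defined by θ_{t+1} = θ̂(θ_t − θ*) satisfies |θ_t − θ*| ≤ c^t·|θ_0 − θ*| for all t ≥ 0; in particular θ_t converges to the optimal balanced decision boundary θ* with a linear rate. -/

import Mathlib

open MeasureTheory Real Set Filter

/-- The standard normal density `φ`. -/
noncomputable def stdGauss (t : ℝ) : ℝ :=
  (Real.sqrt (2 * Real.pi))⁻¹ * Real.exp (-t ^ 2 / 2)

/-- The standard normal CDF `Φ`. -/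
noncomputable def stdCDF (t : ℝ) : ℝ := ∫ s in Set.Iic t, stdGauss s

/-- The (pseudo-)prior of the head class: `p1(Δ) = e^{2xΔ}/(1+e^{2xΔ})`, `x = (μ2−μ1)/2`. -/
noncomputable def pHead (x Δ : ℝ) : ℝ := Real.exp (2 * x * Δ) / (1 + Real.exp (2 * x * Δ))

/-- The (pseudo-)prior of the tail class: `p2(Δ) = 1/(1+e^{2xΔ})`, `x = (μ2−μ1)/2`. -/
noncomputable def pTail (x Δ : ℝ) : ℝ := 1 / (1 + Real.exp (2 * x * Δ))

/-- The mixture density `f_Δ(t) = p1(Δ)·φ(t−μ1) + p2(Δ)·φ(t−μ2)`. -/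
noncomputable def mixDensity (μ1 μ2 Δ t : ℝ) : ℝ :=
  pHead ((μ2 - μ1) / 2) Δ * stdGauss (t - μ1) + pTail ((μ2 - μ1) / 2) Δ * stdGauss (t - μ2)

/-- The conditional mean `m1(Δ)` of `f_Δ` to the left of the boundary `θ* + Δ`. -/
noncomputable def mLeft (μ1 μ2 Δ : ℝ) : ℝ :=
  (∫ t in Set.Iic ((μ1 + μ2) / 2 + Δ), t * mixDensity μ1 μ2 Δ t) /
    ∫ t in Set.Iic ((μ1 + μ2) / 2 + Δ), mixDensity μ1 μ2 Δ t

/-- The conditional mean `m2(Δ)` of `f_Δ` to the right of the boundary `θ* + Δ`. -/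
noncomputable def mRight (μ1 μ2 Δ : ℝ) : ℝ :=
  (∫ t in Set.Ioi ((μ1 + μ2) / 2 + Δ), t * mixDensity μ1 μ2 Δ t) /
    ∫ t in Set.Ioi ((μ1 + μ2) / 2 + Δ), mixDensity μ1 μ2 Δ t

/-- The progressively-balanced-sampling update `θ̂(Δ) = (m1(Δ) + m2(Δ))/2`. -/
noncomputable def pbsUpdate (μ1 μ2 Δ : ℝ) : ℝ := (mLeft μ1 μ2 Δ + mRight μ1 μ2 Δ) / 2




lemma sqrt2pi_pos : 0 < Real.sqrt (2 * Real.pi) :=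
  Real.sqrt_pos.2 (by positivity)

lemma stdGauss_pos (t : ℝ) : 0 < stdGauss t := by
  unfold stdGauss; positivity

lemma stdGauss_even (t : ℝ) : stdGauss (-t) = stdGauss t := by
  unfold stdGauss; ring_nf

lemma continuous_stdGauss : Continuous stdGauss := by
  unfold stdGauss
  exact continuous_const.mul ((continuous_id.pow 2).neg.div_const 2).rexp

lemma stdGauss_exp (t : ℝ) : stdGauss t = (Real.sqrt (2 * Real.pi))⁻¹ * Real.exp (-(1/2) * t ^ 2) := by
  unfold stdGauss; ring_nf

lemma integrable_stdGauss : Integrable stdGauss := by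
  have h := (integrable_exp_neg_mul_sq (by norm_num : (0:ℝ) < 1/2)).const_mul
    (Real.sqrt (2 * Real.pi))⁻¹
  refine h.congr (Filter.Eventually.of_forall fun t => ?_)
  rw [stdGauss_exp]

lemma integrable_mul_stdGauss : Integrable (fun t : ℝ => t * stdGauss t) := by
  have h := (integrable_mul_exp_neg_mul_sq (by norm_num : (0:ℝ) < 1/2)).const_mul
    (Real.sqrt (2 * Real.pi))⁻¹
  refine h.congr (Filter.Eventually.of_forall fun t => ?_)
  show _ = t * stdGauss t
  rw [stdGauss_exp]; ring

lemma hasDerivAt_stdGauss (t : ℝ) : HasDerivAt stdGauss (-t * stdGauss t) t := by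
  have h : HasDerivAt (fun t : ℝ => -t ^ 2 / 2) (-t) t := by
    have := ((hasDerivAt_pow 2 t).neg).div_const 2
    simpa using this.congr_deriv (by push_cast; ring)
  have h2 := (h.exp).const_mul (Real.sqrt (2 * Real.pi))⁻¹
  refine h2.congr_deriv ?_
  unfold stdGauss; ring

lemma tendsto_stdGauss_atTop : Tendsto stdGauss atTop (nhds 0) := by
  have h1 : Tendsto (fun t : ℝ => -t ^ 2 / 2) atTop atBot := by
    apply Tendsto.atBot_div_const (by norm_num)
    exact tendsto_neg_atTop_atBot.comp (tendsto_pow_atTop (by norm_num))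
  have h3 := (Real.tendsto_exp_atBot.comp h1).const_mul (Real.sqrt (2 * Real.pi))⁻¹
  rw [mul_zero] at h3
  exact h3

lemma tendsto_stdGauss_atBot : Tendsto stdGauss atBot (nhds 0) := by
  have := tendsto_stdGauss_atTop.comp tendsto_neg_atBot_atTop
  refine this.congr fun t => ?_
  simp [Function.comp, stdGauss_even]

lemma integral_stdGauss : ∫ t : ℝ, stdGauss t = 1 := by
  have : ∫ t : ℝ, stdGauss t
      = (Real.sqrt (2 * Real.pi))⁻¹ * ∫ t : ℝ, Real.exp (-(1/2) * t ^ 2) := by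
    rw [← integral_const_mul]
    exact integral_congr_ae (Filter.Eventually.of_forall fun t => by rw [stdGauss_exp])
  rw [this, integral_gaussian]
  have : Real.pi / (1/2) = 2 * Real.pi := by ring
  rw [this, inv_mul_cancel₀ (ne_of_gt sqrt2pi_pos)]

lemma integral_Iic_mul_stdGauss (b : ℝ) :
    ∫ t in Set.Iic b, t * stdGauss t = -stdGauss b := by
  have := integral_Iic_of_hasDerivAt_of_tendsto'
    (f := fun t => -stdGauss t) (f' := fun t => t * stdGauss t) (a := b) (m := 0)
    (fun t _ => by simpa using (hasDerivAt_stdGauss t).fun_neg)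
    integrable_mul_stdGauss.integrableOn
    (by simpa using tendsto_stdGauss_atBot.neg)
  simpa using this

lemma integral_Ioi_mul_stdGauss (b : ℝ) :
    ∫ t in Set.Ioi b, t * stdGauss t = stdGauss b := by
  have := integral_Ioi_of_hasDerivAt_of_tendsto'
    (f := fun t => -stdGauss t) (f' := fun t => t * stdGauss t) (a := b) (m := 0)
    (fun t _ => by simpa using (hasDerivAt_stdGauss t).fun_neg)
    integrable_mul_stdGauss.integrableOn
    (by simpa using tendsto_stdGauss_atTop.neg)
  simpa using this

lemma integral_Ioi_stdGauss (b : ℝ) :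
    ∫ t in Set.Ioi b, stdGauss t = 1 - stdCDF b := by
  have h := intervalIntegral.integral_Iic_add_Ioi (b := b) integrable_stdGauss.integrableOn
    integrable_stdGauss.integrableOn
  rw [integral_stdGauss] at h
  unfold stdCDF; linarith

lemma stdCDF_pos (b : ℝ) : 0 < stdCDF b := by
  unfold stdCDF
  refine (setIntegral_pos_iff_support_of_nonneg_ae ?_ integrable_stdGauss.integrableOn).2 ?_
  · exact Filter.Eventually.of_forall fun t => (stdGauss_pos t).le
  · have : Function.support stdGauss = Set.univ := by
      ext t; simp [Function.mem_support, (stdGauss_pos t).ne']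
    rw [this, Set.univ_inter]
    simp [Real.volume_Iic]

lemma one_sub_stdCDF_pos (b : ℝ) : 0 < 1 - stdCDF b := by
  have h := integral_Ioi_stdGauss b
  rw [← h]
  refine (setIntegral_pos_iff_support_of_nonneg_ae ?_ integrable_stdGauss.integrableOn).2 ?_
  · exact Filter.Eventually.of_forall fun t => (stdGauss_pos t).le
  · have : Function.support stdGauss = Set.univ := by
      ext t; simp [Function.mem_support, (stdGauss_pos t).ne']
    rw [this, Set.univ_inter]
    simp [Real.volume_Ioi]

lemma stdCDF_lt_one (b : ℝ) : stdCDF b < 1 := by linarith [one_sub_stdCDF_pos b]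

lemma stdCDF_neg (b : ℝ) : stdCDF (-b) = 1 - stdCDF b := by
  have h1 : ∫ s in Set.Ioi b, stdGauss (-s) = ∫ s in Set.Iic (-b), stdGauss s :=
    integral_comp_neg_Ioi b stdGauss
  have h2 : ∫ s in Set.Ioi b, stdGauss (-s) = ∫ s in Set.Ioi b, stdGauss s :=
    integral_congr_ae (Filter.Eventually.of_forall fun t => show stdGauss (-t) = stdGauss t from stdGauss_even t)
  have hdef : stdCDF (-b) = ∫ s in Set.Iic (-b), stdGauss s := rfl
  rw [hdef, ← h1, h2, integral_Ioi_stdGauss]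

lemma stdCDF_zero : stdCDF 0 = 1 / 2 := by
  have := stdCDF_neg 0
  rw [neg_zero] at this; linarith

lemma stdCDF_sub (a b : ℝ) : stdCDF b - stdCDF a = ∫ t in a..b, stdGauss t := by
  unfold stdCDF
  rw [intervalIntegral.integral_Iic_sub_Iic integrable_stdGauss.integrableOn
    integrable_stdGauss.integrableOn]

lemma hasDerivAt_stdCDF (b : ℝ) : HasDerivAt stdCDF (stdGauss b) b := by
  have key : ∀ y : ℝ, stdCDF y = stdCDF 0 + ∫ t in (0:ℝ)..y, stdGauss t := by
    intro y; rw [← stdCDF_sub]; ring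
  have h : HasDerivAt (fun y => stdCDF 0 + ∫ t in (0:ℝ)..y, stdGauss t) (stdGauss b) b := by
    refine HasDerivAt.const_add _ ?_
    refine intervalIntegral.integral_hasDerivAt_right
      (continuous_stdGauss.intervalIntegrable 0 b)
      (continuous_stdGauss.stronglyMeasurableAtFilter _ _) continuous_stdGauss.continuousAt
  exact h.congr_deriv rfl |>.congr_of_eventuallyEq (Filter.Eventually.of_forall key)


lemma shift_Iic (g : ℝ → ℝ) (μ β : ℝ) :
    ∫ t in Set.Iic β, g (t - μ) = ∫ s in Set.Iic (β - μ), g (s + μ - μ) := by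
  have h₁ : MeasurePreserving (fun s : ℝ => s + μ) volume volume :=
    measurePreserving_add_right volume μ
  have h₂ : MeasurableEmbedding (fun s : ℝ => s + μ) :=
    (Homeomorph.addRight μ).isClosedEmbedding.measurableEmbedding
  have key := h₁.setIntegral_preimage_emb h₂ (fun t => g (t - μ)) (Set.Iic β)
  have hpre : (fun s : ℝ => s + μ) ⁻¹' Set.Iic β = Set.Iic (β - μ) := by
    ext s; simp [le_sub_iff_add_le]
  rw [hpre] at key
  exact key.symm

lemma shift_Ioi (g : ℝ → ℝ) (μ β : ℝ) :
    ∫ t in Set.Ioi β, g (t - μ) = ∫ s in Set.Ioi (β - μ), g (s + μ - μ) := by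
  have h₁ : MeasurePreserving (fun s : ℝ => s + μ) volume volume :=
    measurePreserving_add_right volume μ
  have h₂ : MeasurableEmbedding (fun s : ℝ => s + μ) :=
    (Homeomorph.addRight μ).isClosedEmbedding.measurableEmbedding
  have key := h₁.setIntegral_preimage_emb h₂ (fun t => g (t - μ)) (Set.Ioi β)
  have hpre : (fun s : ℝ => s + μ) ⁻¹' Set.Ioi β = Set.Ioi (β - μ) := by
    ext s; simp [lt_sub_iff_add_lt]
  rw [hpre] at key
  exact key.symm

lemma integral_Iic_gauss_shift (μ β : ℝ) :
    ∫ t in Set.Iic β, stdGauss (t - μ) = stdCDF (β - μ) := by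
  rw [shift_Iic stdGauss μ β]
  simp only [add_sub_cancel_right]
  rfl

lemma integral_Ioi_gauss_shift (μ β : ℝ) :
    ∫ t in Set.Ioi β, stdGauss (t - μ) = 1 - stdCDF (β - μ) := by
  rw [shift_Ioi stdGauss μ β]
  simp only [add_sub_cancel_right]
  exact integral_Ioi_stdGauss _

lemma integral_Iic_mul_gauss_shift (μ β : ℝ) :
    ∫ t in Set.Iic β, t * stdGauss (t - μ) = μ * stdCDF (β - μ) - stdGauss (β - μ) := by
  have h0 : ∫ t in Set.Iic β, t * stdGauss (t - μ)
      = ∫ t in Set.Iic β, (fun s => (s + μ) * stdGauss s) (t - μ) := by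
    refine setIntegral_congr_fun measurableSet_Iic fun t _ => ?_
    simp
  rw [h0, shift_Iic (fun s => (s + μ) * stdGauss s) μ β]
  have h1 : ∀ s : ℝ, (fun s => (s + μ) * stdGauss s) (s + μ - μ)
      = s * stdGauss s + μ * stdGauss s := by intro s; simp; ring
  rw [setIntegral_congr_fun measurableSet_Iic (fun s _ => h1 s)]
  rw [integral_add integrable_mul_stdGauss.integrableOn
    ((integrable_stdGauss.const_mul μ).integrableOn)]
  rw [integral_Iic_mul_stdGauss, integral_const_mul]
  have : ∫ s in Set.Iic (β - μ), stdGauss s = stdCDF (β - μ) := rfl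
  rw [this]; ring

lemma integral_Ioi_mul_gauss_shift (μ β : ℝ) :
    ∫ t in Set.Ioi β, t * stdGauss (t - μ) = μ * (1 - stdCDF (β - μ)) + stdGauss (β - μ) := by
  have h0 : ∫ t in Set.Ioi β, t * stdGauss (t - μ)
      = ∫ t in Set.Ioi β, (fun s => (s + μ) * stdGauss s) (t - μ) := by
    refine setIntegral_congr_fun measurableSet_Ioi fun t _ => ?_
    simp
  rw [h0, shift_Ioi (fun s => (s + μ) * stdGauss s) μ β]
  have h1 : ∀ s : ℝ, (fun s => (s + μ) * stdGauss s) (s + μ - μ)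
      = s * stdGauss s + μ * stdGauss s := by intro s; simp; ring
  rw [setIntegral_congr_fun measurableSet_Ioi (fun s _ => h1 s)]
  rw [integral_add integrable_mul_stdGauss.integrableOn
    ((integrable_stdGauss.const_mul μ).integrableOn)]
  rw [integral_Ioi_mul_stdGauss, integral_const_mul, integral_Ioi_stdGauss]
  ring

lemma integrable_gauss_shift (μ : ℝ) : Integrable (fun t => stdGauss (t - μ)) :=
  integrable_stdGauss.comp_sub_right μ

lemma integrable_mul_gauss_shift (μ : ℝ) : Integrable (fun t => t * stdGauss (t - μ)) := by
  have h := (integrable_mul_stdGauss.comp_sub_right μ).add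
    ((integrable_stdGauss.comp_sub_right μ).const_mul μ)
  refine h.congr (Filter.Eventually.of_forall fun t => ?_)
  show (t - μ) * stdGauss (t - μ) + μ * stdGauss (t - μ) = t * stdGauss (t - μ)
  ring

noncomputable def Gfun (x Δ : ℝ) : ℝ :=
  (Real.exp (2*x*Δ) * (-x * stdCDF (x+Δ) - stdGauss (x+Δ)) +
      (x * stdCDF (Δ-x) - stdGauss (Δ-x))) /
    (Real.exp (2*x*Δ) * stdCDF (x+Δ) + stdCDF (Δ-x)) / 2 +
  (Real.exp (2*x*Δ) * (-x * (1 - stdCDF (x+Δ)) + stdGauss (x+Δ)) +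
      (x * (1 - stdCDF (Δ-x)) + stdGauss (Δ-x))) /
    (Real.exp (2*x*Δ) * (1 - stdCDF (x+Δ)) + (1 - stdCDF (Δ-x))) / 2

lemma pbs_eq (μ1 μ2 : ℝ) (h : μ1 < μ2) (Δ : ℝ) :
    pbsUpdate μ1 μ2 Δ = (μ1 + μ2) / 2 + Gfun ((μ2 - μ1) / 2) Δ := by
  set x : ℝ := (μ2 - μ1) / 2 with hx
  set θ : ℝ := (μ1 + μ2) / 2 with hθ
  set E : ℝ := Real.exp (2 * x * Δ) with hE
  have hEpos : 0 < E := Real.exp_pos _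
  have ha1 : θ + Δ - μ1 = x + Δ := by rw [hx, hθ]; ring
  have ha2 : θ + Δ - μ2 = Δ - x := by rw [hx, hθ]; ring
  set P1 : ℝ := stdCDF (x + Δ) with hP1
  set P2 : ℝ := stdCDF (Δ - x) with hP2
  set f1 : ℝ := stdGauss (x + Δ) with hf1
  set f2 : ℝ := stdGauss (Δ - x) with hf2
  have hP1pos := stdCDF_pos (x + Δ)
  have hP2pos := stdCDF_pos (Δ - x)
  have hP1lt := stdCDF_lt_one (x + Δ)
  have hP2lt := stdCDF_lt_one (Δ - x)
  -- closed forms of the four integrals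
  have int_mix : ∀ p q : ℝ,
      Integrable (fun t => p * stdGauss (t - μ1) + q * stdGauss (t - μ2)) := fun p q =>
    ((integrable_gauss_shift μ1).const_mul p).add ((integrable_gauss_shift μ2).const_mul q)
  have int_mix' : ∀ p q : ℝ,
      Integrable (fun t => t * (p * stdGauss (t - μ1) + q * stdGauss (t - μ2))) := by
    intro p q
    have h := ((integrable_mul_gauss_shift μ1).const_mul p).add
      ((integrable_mul_gauss_shift μ2).const_mul q)
    refine h.congr (Filter.Eventually.of_forall fun t => ?_)
    show p * (t * stdGauss (t - μ1)) + q * (t * stdGauss (t - μ2)) = _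
    ring
  have hmixf : ∀ t : ℝ, mixDensity μ1 μ2 Δ t
      = pHead x Δ * stdGauss (t - μ1) + pTail x Δ * stdGauss (t - μ2) := fun t => rfl
  have den1 : ∫ t in Set.Iic (θ + Δ), mixDensity μ1 μ2 Δ t
      = pHead x Δ * P1 + pTail x Δ * P2 := by
    rw [setIntegral_congr_fun measurableSet_Iic (fun t _ => hmixf t)]
    rw [integral_add ((integrable_gauss_shift μ1).const_mul _).integrableOn
      ((integrable_gauss_shift μ2).const_mul _).integrableOn]
    rw [integral_const_mul, integral_const_mul, integral_Iic_gauss_shift,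
      integral_Iic_gauss_shift, ha1, ha2]
  have num1 : ∫ t in Set.Iic (θ + Δ), t * mixDensity μ1 μ2 Δ t
      = pHead x Δ * (μ1 * P1 - f1) + pTail x Δ * (μ2 * P2 - f2) := by
    have : ∀ t : ℝ, t * mixDensity μ1 μ2 Δ t
        = pHead x Δ * (t * stdGauss (t - μ1)) + pTail x Δ * (t * stdGauss (t - μ2)) := by
      intro t; rw [hmixf]; ring
    rw [setIntegral_congr_fun measurableSet_Iic (fun t _ => this t)]
    rw [integral_add ((integrable_mul_gauss_shift μ1).const_mul _).integrableOn
      ((integrable_mul_gauss_shift μ2).const_mul _).integrableOn]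
    rw [integral_const_mul, integral_const_mul, integral_Iic_mul_gauss_shift,
      integral_Iic_mul_gauss_shift, ha1, ha2]
  have den2 : ∫ t in Set.Ioi (θ + Δ), mixDensity μ1 μ2 Δ t
      = pHead x Δ * (1 - P1) + pTail x Δ * (1 - P2) := by
    rw [setIntegral_congr_fun measurableSet_Ioi (fun t _ => hmixf t)]
    rw [integral_add ((integrable_gauss_shift μ1).const_mul _).integrableOn
      ((integrable_gauss_shift μ2).const_mul _).integrableOn]
    rw [integral_const_mul, integral_const_mul, integral_Ioi_gauss_shift,
      integral_Ioi_gauss_shift, ha1, ha2]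
  have num2 : ∫ t in Set.Ioi (θ + Δ), t * mixDensity μ1 μ2 Δ t
      = pHead x Δ * (μ1 * (1 - P1) + f1) + pTail x Δ * (μ2 * (1 - P2) + f2) := by
    have : ∀ t : ℝ, t * mixDensity μ1 μ2 Δ t
        = pHead x Δ * (t * stdGauss (t - μ1)) + pTail x Δ * (t * stdGauss (t - μ2)) := by
      intro t; rw [hmixf]; ring
    rw [setIntegral_congr_fun measurableSet_Ioi (fun t _ => this t)]
    rw [integral_add ((integrable_mul_gauss_shift μ1).const_mul _).integrableOn
      ((integrable_mul_gauss_shift μ2).const_mul _).integrableOn]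
    rw [integral_const_mul, integral_const_mul, integral_Ioi_mul_gauss_shift,
      integral_Ioi_mul_gauss_shift, ha1, ha2]
  have hph : pHead x Δ = E / (1 + E) := rfl
  have hpt : pTail x Δ = 1 / (1 + E) := rfl
  have h1E : (0:ℝ) < 1 + E := by linarith
  have hd1 : 0 < E * P1 + P2 := by positivity
  have hd2 : 0 < E * (1 - P1) + (1 - P2) := by
    have : 0 < E * (1 - P1) := mul_pos hEpos (by linarith)
    linarith
  have hμ1 : μ1 = θ - x := by rw [hx, hθ]; ring
  have hμ2 : μ2 = θ + x := by rw [hx, hθ]; ring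
  unfold pbsUpdate mLeft mRight
  rw [den1, num1, den2, num2, hph, hpt, hμ1, hμ2]
  unfold Gfun
  rw [← hE, ← hP1, ← hP2, ← hf1, ← hf2]
  field_simp
  ring

lemma contDiff_stdGauss : ContDiff ℝ 1 stdGauss := by
  unfold stdGauss
  exact ContDiff.mul contDiff_const (((contDiff_id.pow 2).neg.div_const 2).exp)

lemma contDiff_stdCDF : ContDiff ℝ 1 stdCDF := by
  rw [contDiff_one_iff_deriv]
  constructor
  · exact fun b => (hasDerivAt_stdCDF b).differentiableAt
  · have : deriv stdCDF = stdGauss := funext fun b => (hasDerivAt_stdCDF b).deriv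
    rw [this]; exact continuous_stdGauss

lemma den1_pos (x Δ : ℝ) :
    0 < Real.exp (2*x*Δ) * stdCDF (x+Δ) + stdCDF (Δ-x) := by
  have := Real.exp_pos (2*x*Δ); have := stdCDF_pos (x+Δ); have := stdCDF_pos (Δ-x)
  positivity

lemma den2_pos (x Δ : ℝ) :
    0 < Real.exp (2*x*Δ) * (1 - stdCDF (x+Δ)) + (1 - stdCDF (Δ-x)) := by
  have h1 := Real.exp_pos (2*x*Δ)
  have h2 := one_sub_stdCDF_pos (x+Δ)
  have h3 := one_sub_stdCDF_pos (Δ-x)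
  have : 0 < Real.exp (2*x*Δ) * (1 - stdCDF (x+Δ)) := mul_pos h1 h2
  linarith

lemma contDiff_Gfun (x : ℝ) : ContDiff ℝ 1 (fun Δ => Gfun x Δ) := by
  have hE : ContDiff ℝ 1 (fun Δ : ℝ => Real.exp (2*x*Δ)) :=
    ((contDiff_const.mul contDiff_id).exp)
  have hP1 : ContDiff ℝ 1 (fun Δ : ℝ => stdCDF (x+Δ)) :=
    contDiff_stdCDF.comp (contDiff_const.add contDiff_id)
  have hP2 : ContDiff ℝ 1 (fun Δ : ℝ => stdCDF (Δ-x)) :=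
    contDiff_stdCDF.comp (contDiff_id.sub contDiff_const)
  have hf1 : ContDiff ℝ 1 (fun Δ : ℝ => stdGauss (x+Δ)) :=
    contDiff_stdGauss.comp (contDiff_const.add contDiff_id)
  have hf2 : ContDiff ℝ 1 (fun Δ : ℝ => stdGauss (Δ-x)) :=
    contDiff_stdGauss.comp (contDiff_id.sub contDiff_const)
  unfold Gfun
  simp only [neg_mul]
  refine ContDiff.add (ContDiff.div_const ?_ 2) (ContDiff.div_const ?_ 2)
  · refine ContDiff.div ?_ ?_ ?_
    · exact (hE.mul ((contDiff_const.mul hP1).neg.sub hf1)).add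
        ((contDiff_const.mul hP2).sub hf2)
    · exact (hE.mul hP1).add hP2
    · exact fun Δ => (den1_pos x Δ).ne'
  · refine ContDiff.div ?_ ?_ ?_
    · exact (hE.mul ((contDiff_const.mul (contDiff_const.sub hP1)).neg.add hf1)).add
        ((contDiff_const.mul (contDiff_const.sub hP2)).add hf2)
    · exact (hE.mul (contDiff_const.sub hP1)).add (contDiff_const.sub hP2)
    · exact fun Δ => (den2_pos x Δ).ne'

lemma Gfun_zero (x : ℝ) : Gfun x 0 = 0 := by
  unfold Gfun
  have h1 : (0:ℝ) - x = -x := by ring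
  have h2 : x + (0:ℝ) = x := by ring
  rw [h1, h2, stdCDF_neg, stdGauss_even, mul_zero, Real.exp_zero]
  ring

lemma hasDerivAt_Gfun_zero (x : ℝ) :
    HasDerivAt (fun Δ => Gfun x Δ)
      ((x * (2 * stdCDF x - 1) + 2 * stdGauss x) ^ 2 - x ^ 2) 0 := by
  have h1 : HasDerivAt (fun Δ : ℝ => x + Δ) 1 0 := (hasDerivAt_id 0).const_add x
  have h2 : HasDerivAt (fun Δ : ℝ => Δ - x) 1 0 := (hasDerivAt_id 0).sub_const x
  have hP1 : HasDerivAt (fun Δ : ℝ => stdCDF (x + Δ)) (stdGauss x) 0 := by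
    have := (hasDerivAt_stdCDF (x + 0)).comp 0 h1
    simpa [Function.comp_def] using this
  have hP2 : HasDerivAt (fun Δ : ℝ => stdCDF (Δ - x)) (stdGauss x) 0 := by
    have := (hasDerivAt_stdCDF (0 - x)).comp 0 h2
    simpa [stdGauss_even, Function.comp_def] using this
  have hf1 : HasDerivAt (fun Δ : ℝ => stdGauss (x + Δ)) (-x * stdGauss x) 0 := by
    have := (hasDerivAt_stdGauss (x + 0)).comp 0 h1
    simpa [Function.comp_def] using this
  have hf2 : HasDerivAt (fun Δ : ℝ => stdGauss (Δ - x)) (x * stdGauss x) 0 := by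
    have := (hasDerivAt_stdGauss (0 - x)).comp 0 h2
    simpa [stdGauss_even, Function.comp_def] using this
  have hEd : HasDerivAt (fun Δ : ℝ => Real.exp (2 * x * Δ)) (2 * x) 0 := by
    have hlin : HasDerivAt (fun Δ : ℝ => 2 * x * Δ) (2 * x) 0 := by
      simpa using (hasDerivAt_id (0:ℝ)).const_mul (2 * x)
    have := (Real.hasDerivAt_exp (2 * x * 0)).comp 0 hlin
    simpa [Function.comp_def] using this
  have hq1 := (hEd.mul (((hP1.const_mul (-x)).sub hf1))).add ((hP2.const_mul x).sub hf2)
  have hd1 := (hEd.mul hP1).add hP2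
  have hq2 := (hEd.mul (((hP1.const_sub 1).const_mul (-x)).add hf1)).add
    (((hP2.const_sub 1).const_mul x).add hf2)
  have hd2 := (hEd.mul (hP1.const_sub 1)).add (hP2.const_sub 1)
  have hden1 : (fun Δ : ℝ => Real.exp (2*x*Δ) * stdCDF (x+Δ) + stdCDF (Δ-x)) 0 ≠ 0 :=
    (den1_pos x 0).ne'
  have hden2 : (fun Δ : ℝ => Real.exp (2*x*Δ) * (1 - stdCDF (x+Δ)) + (1 - stdCDF (Δ-x))) 0 ≠ 0 :=
    (den2_pos x 0).ne'
  have hG := ((hq1.div hd1 hden1).div_const 2).add ((hq2.div hd2 hden2).div_const 2)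
  refine hG.congr_deriv ?_
  have e0 : Real.exp (2 * x * 0) = 1 := by rw [mul_zero, Real.exp_zero]
  have c1 : stdCDF (x + 0) = stdCDF x := by rw [add_zero]
  have c2 : stdCDF (0 - x) = 1 - stdCDF x := by rw [zero_sub, stdCDF_neg]
  have g1 : stdGauss (x + 0) = stdGauss x := by rw [add_zero]
  have g2 : stdGauss (0 - x) = stdGauss x := by rw [zero_sub, stdGauss_even]
  simp only [Pi.add_apply, Pi.sub_apply, Pi.mul_apply, Pi.div_apply, e0, c1, c2, g1, g2]
  ring

lemma stdGauss_anti {t y : ℝ} (h0 : 0 ≤ t) (hty : t ≤ y) : stdGauss y ≤ stdGauss t := by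
  unfold stdGauss
  apply mul_le_mul_of_nonneg_left _ (by positivity)
  apply Real.exp_le_exp.2
  nlinarith

lemma stdGauss_zero : stdGauss 0 = (Real.sqrt (2 * Real.pi))⁻¹ := by
  unfold stdGauss; norm_num

lemma stdGauss_le_max (t : ℝ) : stdGauss t ≤ stdGauss 0 := by
  rcases le_or_gt 0 t with h | h
  · exact stdGauss_anti le_rfl h
  · rw [← stdGauss_even t]; exact stdGauss_anti le_rfl (by linarith)

lemma stdCDF_int (a b : ℝ) : stdCDF b - stdCDF a = ∫ t in a..b, stdGauss t := stdCDF_sub a b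

lemma half_le_stdCDF {x : ℝ} (hx : 0 ≤ x) : 1 / 2 ≤ stdCDF x := by
  have h := stdCDF_sub 0 x
  rw [stdCDF_zero] at h
  have hnn : 0 ≤ ∫ t in (0:ℝ)..x, stdGauss t :=
    intervalIntegral.integral_nonneg hx fun t _ => (stdGauss_pos t).le
  linarith

lemma two_mul_gauss_le {x : ℝ} (hx : 0 ≤ x) : 2 * x * stdGauss x ≤ 2 * stdCDF x - 1 := by
  have h := stdCDF_sub 0 x
  rw [stdCDF_zero] at h
  have hmono : x * stdGauss x ≤ ∫ t in (0:ℝ)..x, stdGauss t := by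
    have : ∫ t in (0:ℝ)..x, stdGauss x = x * stdGauss x := by
      simp [intervalIntegral.integral_const, smul_eq_mul]
    rw [← this]
    apply intervalIntegral.integral_mono_on hx
      (intervalIntegrable_const) (continuous_stdGauss.intervalIntegrable 0 x)
    intro t ht
    exact stdGauss_anti ht.1 ht.2
  linarith

lemma cdf_sub_le {x : ℝ} (hx : 0 ≤ x) : 2 * stdCDF x - 1 ≤ 2 * x * stdGauss 0 := by
  have h := stdCDF_sub 0 x
  rw [stdCDF_zero] at h
  have hmono : (∫ t in (0:ℝ)..x, stdGauss t) ≤ x * stdGauss 0 := by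
    have : ∫ t in (0:ℝ)..x, stdGauss 0 = x * stdGauss 0 := by
      simp [intervalIntegral.integral_const, smul_eq_mul]
    rw [← this]
    apply intervalIntegral.integral_mono_on hx
      (continuous_stdGauss.intervalIntegrable 0 x) intervalIntegrable_const
    intro t _
    exact stdGauss_le_max t
  linarith

lemma mills_up {x : ℝ} (hx : 0 ≤ x) : x * (1 - stdCDF x) ≤ stdGauss x := by
  rw [← integral_Ioi_stdGauss, ← integral_Ioi_mul_stdGauss, ← integral_const_mul]
  apply setIntegral_mono_on ((integrable_stdGauss.const_mul x).integrableOn)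
    (integrable_mul_stdGauss.integrableOn) measurableSet_Ioi
  intro t ht
  exact mul_le_mul_of_nonneg_right (le_of_lt ht) (stdGauss_pos t).le

lemma mills_low {x : ℝ} (hx : 1 ≤ x) : x * stdGauss x / (x ^ 2 + 1) ≤ 1 - stdCDF x := by
  have hx0 : 0 < x := lt_of_lt_of_le one_pos hx
  -- FTC: ∫_{Ioi x} (φ t + φ t / t²) dt = φ x / x
  have hkey : ∫ t in Set.Ioi x, (stdGauss t + stdGauss t / t ^ 2) = stdGauss x / x := by
    have hint : IntegrableOn (fun t => stdGauss t + stdGauss t / t ^ 2) (Set.Ioi x) := by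
      apply Integrable.mono' ((integrable_stdGauss.const_mul 2).integrableOn)
      · apply ContinuousOn.aestronglyMeasurable _ measurableSet_Ioi
        apply ContinuousOn.add continuous_stdGauss.continuousOn
        apply ContinuousOn.div continuous_stdGauss.continuousOn
          (continuous_pow 2).continuousOn
        intro t ht
        exact pow_ne_zero 2 (ne_of_gt (lt_trans hx0 ht))
      · refine (ae_restrict_iff' measurableSet_Ioi).2 (Filter.Eventually.of_forall fun t ht => ?_)
        have ht1 : 1 ≤ t := le_of_lt (lt_of_le_of_lt hx ht)
        have htp := stdGauss_pos t
        have h2 : stdGauss t / t ^ 2 ≤ stdGauss t := by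
          rw [div_le_iff₀ (by nlinarith)]
          nlinarith [mul_nonneg htp.le (by nlinarith : (0:ℝ) ≤ t ^ 2 - 1)]
        rw [Real.norm_eq_abs, abs_of_nonneg (by positivity)]
        linarith
    have := integral_Ioi_of_hasDerivAt_of_tendsto'
      (f := fun t => -(stdGauss t / t)) (f' := fun t => stdGauss t + stdGauss t / t ^ 2)
      (a := x) (m := 0)
      (fun t ht => by
        have ht0 : t ≠ 0 := ne_of_gt (lt_of_lt_of_le hx0 ht)
        have hd := ((hasDerivAt_stdGauss t).div (hasDerivAt_id t) ht0).neg
        refine hd.congr_deriv ?_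
        simp only [id]
        field_simp
        ring)
      hint
      (by
        have : Tendsto (fun t : ℝ => stdGauss t / t) atTop (nhds 0) :=
          tendsto_stdGauss_atTop.div_atTop tendsto_id
        simpa using this.neg)
    rw [this]
    ring
  have hmono : stdGauss x / x ≤ (1 + 1 / x ^ 2) * (1 - stdCDF x) := by
    rw [← integral_Ioi_stdGauss, ← integral_const_mul, ← hkey]
    apply setIntegral_mono_on _ ((integrable_stdGauss.const_mul _).integrableOn)
      measurableSet_Ioi
    · intro t ht
      have ht0 : 0 < t := lt_trans hx0 ht
      have h2 : stdGauss t / t ^ 2 ≤ stdGauss t / x ^ 2 := by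
        apply div_le_div_of_nonneg_left (stdGauss_pos t).le (by positivity)
        nlinarith [(Set.mem_Ioi.1 ht).le]
      have : (1 + 1 / x ^ 2) * stdGauss t = stdGauss t + stdGauss t / x ^ 2 := by
        field_simp
      rw [this]
      linarith
    · -- integrability of the LHS, same as hint above
      apply Integrable.mono' ((integrable_stdGauss.const_mul 2).integrableOn)
      · apply ContinuousOn.aestronglyMeasurable _ measurableSet_Ioi
        apply ContinuousOn.add continuous_stdGauss.continuousOn
        apply ContinuousOn.div continuous_stdGauss.continuousOn
          (continuous_pow 2).continuousOn
        intro t ht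
        exact pow_ne_zero 2 (ne_of_gt (lt_trans hx0 ht))
      · refine (ae_restrict_iff' measurableSet_Ioi).2 (Filter.Eventually.of_forall fun t ht => ?_)
        have ht1 : 1 ≤ t := le_of_lt (lt_of_le_of_lt hx ht)
        have htp := stdGauss_pos t
        have h2 : stdGauss t / t ^ 2 ≤ stdGauss t := by
          rw [div_le_iff₀ (by nlinarith)]
          nlinarith [mul_nonneg htp.le (by nlinarith : (0:ℝ) ≤ t ^ 2 - 1)]
        rw [Real.norm_eq_abs, abs_of_nonneg (by positivity)]
        linarith
  have hgp := stdGauss_pos x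
  have hcdf := stdCDF_lt_one x
  rw [div_le_iff₀ (by positivity)]
  have h3 : (1 + 1 / x ^ 2) = (x ^ 2 + 1) / x ^ 2 := by field_simp
  rw [h3] at hmono
  rw [div_le_iff₀ hx0] at hmono
  have h4 : (x ^ 2 + 1) / x ^ 2 * (1 - stdCDF x) * x = (x ^ 2 + 1) * (1 - stdCDF x) / x := by
    field_simp
  rw [h4, le_div_iff₀ hx0] at hmono
  nlinarith [hmono]

lemma exp_half_le_two : Real.exp (1/2 : ℝ) ≤ 2 := by
  nlinarith [Real.exp_one_lt_d9, Real.exp_pos (1/2 : ℝ),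
    (by rw [← Real.exp_add]; norm_num :
      Real.exp (1/2 : ℝ) * Real.exp (1/2 : ℝ) = Real.exp 1)]

lemma three_halves_le_exp_half : (3/2 : ℝ) ≤ Real.exp (1/2 : ℝ) := by
  have := Real.add_one_le_exp (1/2 : ℝ)
  linarith

lemma exp_bound_poly {u : ℝ} (hu : 0 ≤ u) : Real.exp (-u) ≤ 1 - u + u ^ 2 := by
  have h2 : (0:ℝ) < 1 + u := by linarith
  have key : Real.exp (-u) * (1 + u) ≤ 1 := by
    calc Real.exp (-u) * (1 + u) ≤ Real.exp (-u) * Real.exp u := by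
          apply mul_le_mul_of_nonneg_left _ (Real.exp_pos _).le
          linarith [Real.add_one_le_exp u]
      _ = 1 := by rw [← Real.exp_add]; norm_num
  nlinarith [key, Real.exp_pos (-u), pow_nonneg hu 3, sq_nonneg u]

lemma int01_gauss_le : stdCDF 1 - 1/2 ≤ (53/60 : ℝ) * (Real.sqrt (2 * Real.pi))⁻¹ := by
  have h := stdCDF_sub 0 1
  rw [stdCDF_zero] at h
  have hmono : (∫ t in (0:ℝ)..1, stdGauss t)
      ≤ ∫ t in (0:ℝ)..1, (Real.sqrt (2 * Real.pi))⁻¹ * (1 - t^2/2 + t^4/4) := by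
    apply intervalIntegral.integral_mono_on zero_le_one
      (continuous_stdGauss.intervalIntegrable 0 1)
      (Continuous.intervalIntegrable (by continuity) 0 1)
    intro t ht
    unfold stdGauss
    apply mul_le_mul_of_nonneg_left _ (by positivity)
    have h1 : -t^2/2 = -(t^2/2) := by ring
    rw [h1]
    have := exp_bound_poly (u := t^2/2) (by positivity)
    calc Real.exp (-(t^2/2)) ≤ 1 - t^2/2 + (t^2/2)^2 := this
      _ = 1 - t^2/2 + t^4/4 := by ring
  have hcomp : ∫ t in (0:ℝ)..1, (Real.sqrt (2 * Real.pi))⁻¹ * (1 - t^2/2 + t^4/4)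
      = (53/60 : ℝ) * (Real.sqrt (2 * Real.pi))⁻¹ := by
    rw [intervalIntegral.integral_const_mul]
    have : ∫ t in (0:ℝ)..1, (1 - t^2/2 + t^4/4) = 53/60 := by
      have hrw : ∀ t : ℝ, 1 - t^2/2 + t^4/4 = 1 - (1/2) * t^2 + (1/4) * t^4 := fun t => by ring
      simp_rw [hrw]
      rw [intervalIntegral.integral_add, intervalIntegral.integral_sub,
        intervalIntegral.integral_const_mul, intervalIntegral.integral_const_mul,
        integral_pow, integral_pow]
      · simp; norm_num
      · exact intervalIntegrable_const
      · exact Continuous.intervalIntegrable (by continuity) 0 1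
      · exact Continuous.intervalIntegrable (by continuity) 0 1
      · exact Continuous.intervalIntegrable (by continuity) 0 1
    rw [this]; ring
  rw [← h, hcomp] at hmono
  exact hmono

lemma psi_one_nonneg : 0 ≤ stdCDF 1 * (1 - stdCDF 1) - stdGauss 0 * stdGauss 1 := by
  have hs : Real.sqrt (2 * Real.pi) ^ 2 = 2 * Real.pi := Real.sq_sqrt (by positivity)
  have hIub := int01_gauss_le
  have hIlb : (0:ℝ) ≤ stdCDF 1 - 1/2 := by linarith [half_le_stdCDF (zero_le_one)]
  set I : ℝ := stdCDF 1 - 1/2 with hI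
  have hprod : stdCDF 1 * (1 - stdCDF 1) = 1/4 - I^2 := by rw [hI]; ring
  have hg01 : stdGauss 0 * stdGauss 1 = Real.exp ((-1:ℝ)/2) / (2 * Real.pi) := by
    unfold stdGauss
    have e0 : Real.exp (-(0:ℝ)^2/2) = 1 := by norm_num
    have e1 : (-(1:ℝ)^2/2) = (-1:ℝ)/2 := by norm_num
    have e2 : (Real.sqrt (2*Real.pi))⁻¹ * 1 * ((Real.sqrt (2*Real.pi))⁻¹ * Real.exp ((-1:ℝ)/2))
        = Real.exp ((-1:ℝ)/2) / (Real.sqrt (2*Real.pi))^2 := by ring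
    rw [e0, e1, e2, hs]
  have hexp : Real.exp ((-1:ℝ)/2) ≤ 2/3 := by
    have h1 := three_halves_le_exp_half
    have h2 : Real.exp ((-1:ℝ)/2) * Real.exp (1/2 : ℝ) = 1 := by
      rw [← Real.exp_add]; norm_num
    nlinarith [Real.exp_pos ((-1:ℝ)/2)]
  have hI2 : I^2 ≤ (53/60 : ℝ)^2 / (2 * Real.pi) := by
    have h1 : I ≤ (53/60 : ℝ) * (Real.sqrt (2 * Real.pi))⁻¹ := hIub
    have h2 : I^2 ≤ ((53/60 : ℝ) * (Real.sqrt (2 * Real.pi))⁻¹)^2 := by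
      apply sq_le_sq' _ h1
      have hpos : (0:ℝ) ≤ (53/60 : ℝ) * (Real.sqrt (2 * Real.pi))⁻¹ := by positivity
      exact le_trans (neg_nonpos.mpr hpos) hIlb
    calc I^2 ≤ ((53/60 : ℝ) * (Real.sqrt (2 * Real.pi))⁻¹)^2 := h2
      _ = (53/60 : ℝ)^2 / (2 * Real.pi) := by
          rw [mul_pow, inv_pow, hs]
          ring
  rw [hprod, hg01]
  have hpi : (3:ℝ) < Real.pi := Real.pi_gt_three
  have hpi0 : (0:ℝ) < 2 * Real.pi := by linarith
  have key : ((53/60:ℝ)^2 + Real.exp ((-1:ℝ)/2)) / (2*Real.pi) ≤ 1/4 := by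
    rw [div_le_iff₀ hpi0]
    nlinarith [hexp, hpi]
  have hsplit : Real.exp ((-1:ℝ)/2)/(2*Real.pi) + (53/60:ℝ)^2/(2*Real.pi)
      = ((53/60:ℝ)^2 + Real.exp ((-1:ℝ)/2))/(2*Real.pi) := by ring
  linarith [hI2, key, hsplit]

lemma gauss0_le_two_gauss {y : ℝ} (hy0 : 0 ≤ y) (hy1 : y ≤ 1) :
    stdGauss 0 ≤ 2 * stdGauss y := by
  unfold stdGauss
  have hc : (0:ℝ) < (Real.sqrt (2 * Real.pi))⁻¹ := by positivity
  have h1 : Real.exp ((-1:ℝ)/2) ≤ Real.exp (-y^2/2) := by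
    apply Real.exp_le_exp.2; nlinarith
  have h2 : (1:ℝ)/2 ≤ Real.exp ((-1:ℝ)/2) := by
    have ha := exp_half_le_two
    have hb : Real.exp ((-1:ℝ)/2) * Real.exp ((1:ℝ)/2) = 1 := by
      rw [← Real.exp_add]; norm_num
    nlinarith [Real.exp_pos ((-1:ℝ)/2)]
  have h0 : Real.exp (-(0:ℝ)^2/2) = 1 := by norm_num
  rw [h0, mul_one]
  nlinarith [mul_le_mul_of_nonneg_left (le_trans h2 h1) hc.le]

lemma psi_nonneg {x : ℝ} (hx0 : 0 ≤ x) (hx1 : x ≤ 1) :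
    0 ≤ stdCDF x * (1 - stdCDF x) - stdGauss 0 * stdGauss x := by
  set ψ : ℝ → ℝ := fun y => stdCDF y * (1 - stdCDF y) - stdGauss 0 * stdGauss y with hψdef
  have hder : ∀ y, HasDerivAt ψ
      (stdGauss y * (1 - 2 * stdCDF y) + stdGauss 0 * (y * stdGauss y)) y := by
    intro y
    have h1 := (hasDerivAt_stdCDF y).mul ((hasDerivAt_stdCDF y).const_sub 1)
    have h2 := (hasDerivAt_stdGauss y).const_mul (stdGauss 0)
    refine (h1.sub h2).congr_deriv ?_
    ring
  have hanti : AntitoneOn ψ (Set.Icc 0 1) := by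
    apply antitoneOn_of_deriv_nonpos (convex_Icc 0 1)
    · apply Continuous.continuousOn
      exact ((contDiff_stdCDF.continuous.mul
        (continuous_const.sub contDiff_stdCDF.continuous)).sub
        (continuous_const.mul continuous_stdGauss))
    · intro y _
      exact (hder y).differentiableAt.differentiableWithinAt
    · intro y hy
      rw [interior_Icc] at hy
      obtain ⟨hy0, hy1⟩ := hy
      rw [(hder y).deriv]
      have hkey : y * stdGauss 0 ≤ 2 * stdCDF y - 1 := by
        have h1 := two_mul_gauss_le hy0.le
        have h2 := gauss0_le_two_gauss hy0.le hy1.le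
        nlinarith [hy0.le]
      nlinarith [mul_nonneg (stdGauss_pos y).le
        (by linarith : (0:ℝ) ≤ 2 * stdCDF y - 1 - y * stdGauss 0)]
  have h1 : ψ 1 ≤ ψ x := hanti ⟨hx0, hx1⟩ ⟨zero_le_one, le_rfl⟩ hx1
  have h2 : 0 ≤ ψ 1 := psi_one_nonneg
  have h3 : ψ x = stdCDF x * (1 - stdCDF x) - stdGauss 0 * stdGauss x := rfl
  linarith [h1, h2, h3]

lemma Kineq {x : ℝ} (hx : 0 ≤ x) :
    (2 * stdCDF x - 1) * stdGauss x ≤ 2 * x * stdCDF x * (1 - stdCDF x) := by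
  rcases le_or_gt x 1 with hx1 | hx1
  · have hψ := psi_nonneg hx hx1
    have h1 := cdf_sub_le hx
    have h2 : (2 * stdCDF x - 1) * stdGauss x ≤ (2 * x * stdGauss 0) * stdGauss x :=
      mul_le_mul_of_nonneg_right h1 (stdGauss_pos x).le
    have h3 : 2 * x * (stdGauss 0 * stdGauss x) ≤ 2 * x * (stdCDF x * (1 - stdCDF x)) :=
      mul_le_mul_of_nonneg_left (by linarith) (by linarith)
    nlinarith [h2, h3]
  · have hm := mills_low hx1.le
    have hP1 := stdCDF_lt_one x
    have hP0 := stdCDF_pos x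
    have hf := stdGauss_pos x
    have hd : (0:ℝ) < x ^ 2 + 1 := by positivity
    have hxf : x * stdGauss x ≤ (x ^ 2 + 1) * (1 - stdCDF x) := by
      rw [div_le_iff₀ hd] at hm
      nlinarith [hm]
    have e1 : (2 * stdCDF x - 1) * (x ^ 2 + 1) ≤ 2 * stdCDF x * x ^ 2 := by nlinarith
    have e2 := mul_le_mul_of_nonneg_right e1 hf.le
    have e3 := mul_le_mul_of_nonneg_left hxf
      (by nlinarith : (0:ℝ) ≤ 2 * stdCDF x * x)
    apply le_of_mul_le_mul_right _ hd
    nlinarith [e2, e3]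

lemma u_le {x : ℝ} (hx : 0 ≤ x) :
    (stdGauss x - x * (1 - stdCDF x)) * (x * stdCDF x + stdGauss x) ≤ 1 / (2 * Real.pi) := by
  set U : ℝ → ℝ := fun y => (stdGauss y - y * (1 - stdCDF y)) * (y * stdCDF y + stdGauss y)
    with hUdef
  have hder : ∀ y, HasDerivAt U
      ((2 * stdCDF y - 1) * stdGauss y - 2 * y * stdCDF y * (1 - stdCDF y)) y := by
    intro y
    have ha : HasDerivAt (fun y : ℝ => stdGauss y - y * (1 - stdCDF y)) (-(1 - stdCDF y)) y := by
      have h2 := (hasDerivAt_id y).mul ((hasDerivAt_stdCDF y).const_sub 1)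
      refine ((hasDerivAt_stdGauss y).sub h2).congr_deriv ?_
      simp
    have hb : HasDerivAt (fun y : ℝ => y * stdCDF y + stdGauss y) (stdCDF y) y := by
      have h1 := (hasDerivAt_id y).mul (hasDerivAt_stdCDF y)
      refine (h1.add (hasDerivAt_stdGauss y)).congr_deriv ?_
      simp
    refine (ha.mul hb).congr_deriv ?_
    ring
  have hanti : AntitoneOn U (Set.Ici 0) := by
    apply antitoneOn_of_deriv_nonpos (convex_Ici 0)
    · apply Continuous.continuousOn
      exact ((continuous_stdGauss.sub (continuous_id.mul
        (continuous_const.sub contDiff_stdCDF.continuous))).mul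
        ((continuous_id.mul contDiff_stdCDF.continuous).add continuous_stdGauss))
    · intro y _
      exact (hder y).differentiableAt.differentiableWithinAt
    · intro y hy
      rw [interior_Ici] at hy
      rw [(hder y).deriv]
      have := Kineq (le_of_lt hy)
      linarith
  have hU0 : U 0 = 1 / (2 * Real.pi) := by
    have h0 : U 0 = stdGauss 0 * stdGauss 0 := by
      rw [hUdef]; simp
    rw [h0, stdGauss_zero]
    have hs : Real.sqrt (2 * Real.pi) * Real.sqrt (2 * Real.pi) = 2 * Real.pi :=
      Real.mul_self_sqrt (by positivity)
    rw [← mul_inv, hs, one_div]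
  have h1 : U x ≤ U 0 := hanti (Set.mem_Ici.2 le_rfl) hx hx
  rw [hU0] at h1
  exact h1

lemma deriv_bound {x : ℝ} (hx : 0 ≤ x) :
    |(x * (2 * stdCDF x - 1) + 2 * stdGauss x) ^ 2 - x ^ 2| ≤ 2 / Real.pi := by
  have hU := u_le hx
  have hUnn : 0 ≤ (stdGauss x - x * (1 - stdCDF x)) * (x * stdCDF x + stdGauss x) := by
    apply mul_nonneg
    · linarith [mills_up hx]
    · have h1 := mul_nonneg hx (stdCDF_pos x).le
      linarith [stdGauss_pos x]
  have hid : (x * (2 * stdCDF x - 1) + 2 * stdGauss x) ^ 2 - x ^ 2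
      = 4 * ((stdGauss x - x * (1 - stdCDF x)) * (x * stdCDF x + stdGauss x)) := by ring
  rw [hid, abs_of_nonneg (by linarith)]
  have hpi := Real.pi_pos
  have heq : (2:ℝ) / Real.pi = 4 * (1 / (2 * Real.pi)) := by
    field_simp; ring
  linarith


/-- **Proposition 1 (iterated form).** For every `c` with `2/π < c < 1` there is
`ε > 0` such that any sequence started with `|θ₀ − θ*| < ε` and iterated via
`θ_{t+1} = θ̂(θ_t − θ*)` satisfies `|θ_t − θ*| ≤ c^t·|θ₀ − θ*|` for all `t`; in
particular it converges to the optimal balanced decision boundary `θ*` with a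
linear rate. -/
theorem pbsUpdate_linear_convergence (μ1 μ2 : ℝ) (hμ : μ1 < μ2) :
    ∀ c : ℝ, 2 / Real.pi < c → c < 1 →
      ∃ ε > (0 : ℝ), ∀ θseq : ℕ → ℝ,
        |θseq 0 - (μ1 + μ2) / 2| < ε →
        (∀ t : ℕ, θseq (t + 1) = pbsUpdate μ1 μ2 (θseq t - (μ1 + μ2) / 2)) →
        (∀ t : ℕ, |θseq t - (μ1 + μ2) / 2| ≤ c ^ t * |θseq 0 - (μ1 + μ2) / 2|) ∧
        Filter.Tendsto θseq Filter.atTop (nhds ((μ1 + μ2) / 2)) := by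
  intro c hc1 hc2
  set x : ℝ := (μ2 - μ1) / 2 with hxdef
  have hx : 0 < x := by rw [hxdef]; linarith
  set θ : ℝ := (μ1 + μ2) / 2 with hθdef
  have hpi := Real.pi_pos
  have hc0 : 0 < c := lt_trans (by positivity : (0:ℝ) < 2 / Real.pi) hc1
  have hG0 : Gfun x 0 = 0 := Gfun_zero x
  have hQ := hasDerivAt_Gfun_zero x
  have hcont : Continuous (deriv (fun Δ => Gfun x Δ)) :=
    (contDiff_Gfun x).continuous_deriv le_rfl
  have hlt : |deriv (fun Δ => Gfun x Δ) 0| < c := by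
    rw [hQ.deriv]
    exact lt_of_le_of_lt (deriv_bound hx.le) hc1
  have hopen : IsOpen {y : ℝ | |deriv (fun Δ => Gfun x Δ) y| < c} :=
    isOpen_lt (continuous_abs.comp hcont) continuous_const
  obtain ⟨δ, hδ, hsub⟩ := Metric.isOpen_iff.1 hopen 0 hlt
  have hball : ∀ y : ℝ, |y| < δ → |deriv (fun Δ => Gfun x Δ) y| < c := by
    intro y hy
    exact hsub (by simpa [Real.dist_eq] using hy)
  have hcontr : ∀ Δ : ℝ, |Δ| < δ → |Gfun x Δ| ≤ c * |Δ| := by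
    intro Δ hΔ
    have hdiff : ∀ y ∈ Metric.ball (0:ℝ) δ,
        HasDerivWithinAt (fun Δ => Gfun x Δ) (deriv (fun Δ => Gfun x Δ) y)
          (Metric.ball (0:ℝ) δ) y := fun y _ =>
      (((contDiff_Gfun x).differentiable one_ne_zero) y).hasDerivAt.hasDerivWithinAt
    have hbd : ∀ y ∈ Metric.ball (0:ℝ) δ, ‖deriv (fun Δ => Gfun x Δ) y‖ ≤ c := by
      intro y hy
      rw [Real.norm_eq_abs]
      exact (hball y (by simpa [Real.dist_eq] using hy)).le
    have hmem0 : (0:ℝ) ∈ Metric.ball (0:ℝ) δ := Metric.mem_ball_self hδ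
    have hmemΔ : Δ ∈ Metric.ball (0:ℝ) δ := by simpa [Real.dist_eq] using hΔ
    have := Convex.norm_image_sub_le_of_norm_hasDerivWithin_le hdiff hbd
      (convex_ball 0 δ) hmem0 hmemΔ
    simpa [hG0, Real.norm_eq_abs] using this
  refine ⟨δ, hδ, fun θseq h0 hrec => ?_⟩
  have hstep : ∀ t : ℕ, |θseq t - θ| < δ → |θseq (t+1) - θ| ≤ c * |θseq t - θ| := by
    intro t ht
    rw [hrec t, pbs_eq μ1 μ2 hμ, ← hθdef, ← hxdef]
    have : θ + Gfun x (θseq t - θ) - θ = Gfun x (θseq t - θ) := by ring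
    rw [this]
    exact hcontr _ ht
  have hM : 0 ≤ |θseq 0 - θ| := abs_nonneg _
  have key : ∀ t : ℕ, |θseq t - θ| ≤ c ^ t * |θseq 0 - θ| := by
    intro t
    induction t with
    | zero => simp
    | succ n ih =>
      have hpow : c ^ n ≤ 1 := pow_le_one₀ hc0.le hc2.le
      have hδn : |θseq n - θ| < δ := by
        have : c ^ n * |θseq 0 - θ| ≤ 1 * |θseq 0 - θ| :=
          mul_le_mul_of_nonneg_right hpow hM
        rw [one_mul] at this
        linarith [ih, h0]
      have h1 := hstep n hδn
      have h2 : c * |θseq n - θ| ≤ c * (c ^ n * |θseq 0 - θ|) :=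
        mul_le_mul_of_nonneg_left ih hc0.le
      have h3 : c * (c ^ n * |θseq 0 - θ|) = c ^ (n+1) * |θseq 0 - θ| := by ring
      linarith
  constructor
  · exact key
  · have hpow0 : Tendsto (fun t : ℕ => c ^ t * |θseq 0 - θ|) atTop (nhds 0) := by
      have h := (tendsto_pow_atTop_nhds_zero_of_lt_one hc0.le hc2).mul_const |θseq 0 - θ|
      simpa using h
    have habs : Tendsto (fun t => |θseq t - θ|) atTop (nhds 0) :=
      squeeze_zero (fun t => abs_nonneg _) key hpow0
    refine tendsto_iff_dist_tendsto_zero.2 ?_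
    simpa [Real.dist_eq] using habs
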